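/- For any superport circuit there exists a collection of currents I_{kl} (1 ≤ k,l ≤ n) and voltages U_1,…,U_n satisfying axioms (C), (I), (P), (B); moreover, the currents are unique, and the voltages are unique up to adding the same constant to all of them. -/

import Mathlib

open Finset BigOperators
open scoped Classical

namespace Superport

/-- A superport network: a finite connected simple graph on `Fin n` with conductances `c`
and `p` nonempty pairwise disjoint superports `A 0, …, A (p-1)` occupying the initial
segment of the vertices, ordered consecutively. -/
structure Network where
  n : ℕ
  p : ℕ
  graph : SimpleGraph (Fin n)
  c : Fin n → Fin n → ℝ
  A : Fin p → Finset (Fin n)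
  p_pos : 0 < p
  connected : graph.Connected
  c_symm : ∀ k l, c k l = c l k
  c_pos : ∀ k l, graph.Adj k l → 0 < c k l
  c_zero : ∀ k l, ¬ graph.Adj k l → c k l = 0
  A_nonempty : ∀ i, (A i).Nonempty
  A_disjoint : ∀ i j, i ≠ j → Disjoint (A i) (A j)
  A_ordered : ∀ i j u v, i < j → u ∈ A i → v ∈ A j → u < v
  boundary_initial : ∀ v : Fin n, (∃ i, v ∈ A i) ↔ (v : ℕ) < ∑ i, (A i).card

namespace Network

variable (N : Network)

/-- The set of boundary vertices. -/
def M : Finset (Fin N.n) := Finset.univ.biUnion N.A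

/-- The number of boundary vertices. -/
def m : ℕ := N.M.card

theorem mem_M_iff {v : Fin N.n} : v ∈ N.M ↔ ∃ i, v ∈ N.A i := by
  simp [M, Finset.mem_biUnion]

/-- The root of the superport of a boundary vertex `v` (the vertex of maximal number
in the superport containing `v`); for interior `v` we set `root v = v`. -/
noncomputable def root (v : Fin N.n) : Fin N.n :=
  if h : ∃ i, v ∈ N.A i then (N.A h.choose).max' ⟨v, h.choose_spec⟩ else v

/-- The index of the last superport. -/
def lastPort : Fin N.p := ⟨N.p - 1, Nat.sub_lt N.p_pos Nat.one_pos⟩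

theorem M_nonempty : N.M.Nonempty := by
  obtain ⟨v, hv⟩ := N.A_nonempty N.lastPort
  exact ⟨v, N.mem_M_iff.mpr ⟨N.lastPort, hv⟩⟩

theorem root_mem {v : Fin N.n} (hv : v ∈ N.M) : N.root v ∈ N.M := by
  have h : ∃ i, v ∈ N.A i := N.mem_M_iff.mp hv
  rw [root, dif_pos h]
  exact N.mem_M_iff.mpr ⟨h.choose, (N.A h.choose).max'_mem _⟩

theorem root_eq_self_of_max {v : Fin N.n} (hv : v ∈ N.M) (hmax : ∀ u ∈ N.M, u ≤ v) :
    N.root v = v := by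
  have h : ∃ i, v ∈ N.A i := N.mem_M_iff.mp hv
  rw [root, dif_pos h]
  exact le_antisymm (hmax _ (N.mem_M_iff.mpr ⟨h.choose, (N.A h.choose).max'_mem _⟩))
    (Finset.le_max' _ _ h.choose_spec)

/-- Axioms (C), (I), (P), (B) for voltages `U`, currents `I`, and prescribed voltage
differences `ΔU` (only the values of `ΔU` at non-root boundary vertices are relevant). -/
def Axioms (ΔU U : Fin N.n → ℝ) (I : Fin N.n → Fin N.n → ℝ) : Prop :=
  (∀ k l, I k l = N.c k l * (U k - U l)) ∧
  (∀ k, k ∉ N.M → ∑ l, I k l = 0) ∧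
  (∀ i : Fin N.p, i ≠ N.lastPort → ∑ k ∈ N.A i, ∑ l, I k l = 0) ∧
  (∀ k, k ∈ N.M → N.root k ≠ k → U k - U (N.root k) = ΔU k)

/-- The weight of a subgraph: the product of the conductances of its edges. -/
noncomputable def weight (H : SimpleGraph (Fin N.n)) : ℝ :=
  ∏ e ∈ (Set.toFinite H.edgeSet).toFinset, Sym2.lift ⟨N.c, N.c_symm⟩ e

/-- The number of edges of a subgraph. -/
noncomputable def edgeCount (H : SimpleGraph (Fin N.n)) : ℕ :=
  (Set.toFinite H.edgeSet).toFinset.card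

/-- Two vertices lie in a common superport. -/
def samePort (u v : Fin N.n) : Prop := ∃ i, u ∈ N.A i ∧ v ∈ N.A i

/-- The `X`-equivalence: two boundary vertices not in `X` are equivalent iff they lie in
the same superport; each interior vertex and each vertex of `X` forms a singleton class.
For `X = ∅` this is the equivalence relation `∼`. -/
def xSetoid (X : Set (Fin N.n)) : Setoid (Fin N.n) where
  r u v := u = v ∨ (u ∉ X ∧ v ∉ X ∧ N.samePort u v)
  iseqv := by
    constructor
    · intro u; exact Or.inl rfl
    · rintro u v (rfl | ⟨hu, hv, i, hui, hvi⟩)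
      · exact Or.inl rfl
      · exact Or.inr ⟨hv, hu, i, hvi, hui⟩
    · rintro u v w huv hvw
      rcases huv with rfl | ⟨hu, hv, i, hui, hvi⟩
      · exact hvw
      rcases hvw with rfl | ⟨hv', hw, j, hvj, hwj⟩
      · exact Or.inr ⟨hu, hv, i, hui, hvi⟩
      · have hij : i = j := by
          by_contra hij
          exact (Finset.disjoint_left.mp (N.A_disjoint i j hij) hvi) hvj
        exact Or.inr ⟨hu, hw, i, hui, hij ▸ hwj⟩

/-- The quotient of a graph `H` by an equivalence relation `s`: classes `a ≠ b` are
adjacent iff some representatives are adjacent in `H`. -/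
def quotGraph (H : SimpleGraph (Fin N.n)) (s : Setoid (Fin N.n)) :
    SimpleGraph (Quotient s) where
  Adj a b := a ≠ b ∧ ∃ u v, H.Adj u v ∧ Quotient.mk s u = a ∧ Quotient.mk s v = b
  symm := by
    constructor
    rintro a b ⟨hab, u, v, huv, hu, hv⟩
    exact ⟨hab.symm, v, u, huv.symm, hv, hu⟩
  loopless := by
    constructor
    rintro a ⟨hab, -⟩
    exact hab rfl

/-- A spanning forest of the network. -/
def IsSpanningForest (H : SimpleGraph (Fin N.n)) : Prop := H ≤ N.graph ∧ H.IsAcyclic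

/-- A spanning forest becomes a spanning tree in the quotient by the `X`-equivalence
(in the multigraph sense): the quotient is connected and the number of edges of the
forest is one less than the number of equivalence classes.  For `X = {i}` this is
"valid relative to the vertex `i`"; for `X = ∅` this is "valid". -/
def IsValidRel (X : Set (Fin N.n)) (H : SimpleGraph (Fin N.n)) : Prop :=
  N.IsSpanningForest H ∧ (N.quotGraph H (N.xSetoid X)).Connected ∧
    N.edgeCount H + 1 = Nat.card (Quotient (N.xSetoid X))

/-- A valid forest: a spanning forest which becomes a spanning tree in the quotient
by the equivalence `∼`. -/
def IsValidForest (H : SimpleGraph (Fin N.n)) : Prop := N.IsValidRel ∅ H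

/-- The sign `sgn(H, i, j)` of a spanning forest `H` with respect to vertices `i, j`. -/
noncomputable def sgnIJ (H : SimpleGraph (Fin N.n)) (i j : Fin N.n) : ℝ :=
  if i = j ∨ ¬ (N.quotGraph H (N.xSetoid {i, j})).Reachable
      (Quotient.mk (N.xSetoid {i, j}) i) (Quotient.mk (N.xSetoid {i, j}) j)
  then 1 else -1

/-- The type of non-root boundary vertices. -/
abbrev NonRoot := {v : Fin N.n // v ∈ N.M ∧ N.root v ≠ v}

/-- The type of boundary vertices. -/
abbrev Bdry := {v : Fin N.n // v ∈ N.M}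

/-- `L` is the response matrix of the superport network: for any admissible voltages and
currents, the incoming currents at the non-root boundary vertices are obtained from the
prescribed voltage differences by multiplication by `L`. -/
def IsResponse (L : Matrix N.NonRoot N.NonRoot ℝ) : Prop :=
  ∀ (ΔU U : Fin N.n → ℝ) (I : Fin N.n → Fin N.n → ℝ), N.Axioms ΔU U I →
    ∀ x : N.NonRoot, (∑ l, I x.1 l) = ∑ y : N.NonRoot, L x y * ΔU y.1

/-- `C` is the response matrix of the electrical network obtained by unifying all the
superports: same graph and conductances, boundary vertices `M`; axioms (C) and (I). -/
def IsElecResponse (C : Matrix N.Bdry N.Bdry ℝ) : Prop :=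
  ∀ (Ub : N.Bdry → ℝ) (U : Fin N.n → ℝ) (I : Fin N.n → Fin N.n → ℝ),
    (∀ k l, I k l = N.c k l * (U k - U l)) →
    (∀ k, k ∉ N.M → ∑ l, I k l = 0) →
    (∀ v : N.Bdry, U v.1 = Ub v) →
    ∀ v : N.Bdry, (∑ l, I v.1 l) = ∑ u : N.Bdry, C v u * Ub u

/-- The sum of the weights of all valid forests. -/
noncomputable def validForestSum : ℝ :=
  ∑ H ∈ Finset.univ.filter (fun H => N.IsValidForest H), N.weight H

end Network
end Superport

namespace Superport
namespace Network

variable (N : Network)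

lemma c_nonneg (k l : Fin N.n) : 0 ≤ N.c k l := by
  by_cases h : N.graph.Adj k l
  · exact (N.c_pos k l h).le
  · rw [N.c_zero k l h]

lemma port_unique {i j : Fin N.p} {v : Fin N.n} (hi : v ∈ N.A i) (hj : v ∈ N.A j) : i = j := by
  by_contra h
  exact (Finset.disjoint_left.mp (N.A_disjoint i j h) hi) hj

lemma root_of_mem {i : Fin N.p} {v : Fin N.n} (hv : v ∈ N.A i) :
    N.root v = (N.A i).max' ⟨v, hv⟩ := by
  have h : ∃ j, v ∈ N.A j := ⟨i, hv⟩
  rw [root, dif_pos h]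
  have heq := N.port_unique h.choose_spec hv
  subst heq
  rfl

lemma root_max (i : Fin N.p) :
    N.root ((N.A i).max' (N.A_nonempty i)) = (N.A i).max' (N.A_nonempty i) :=
  N.root_of_mem ((N.A i).max'_mem (N.A_nonempty i))

lemma mem_M_of_mem {i : Fin N.p} {v : Fin N.n} (hv : v ∈ N.A i) : v ∈ N.M :=
  N.mem_M_iff.mpr ⟨i, hv⟩

noncomputable def maxM : Fin N.n := N.M.max' N.M_nonempty

lemma maxM_mem : N.maxM ∈ N.M := N.M.max'_mem _

lemma root_maxM : N.root N.maxM = N.maxM :=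
  N.root_eq_self_of_max N.maxM_mem (fun u hu => N.M.le_max' u hu)

lemma maxM_mem_last : N.maxM ∈ N.A N.lastPort := by
  obtain ⟨i, hi⟩ := N.mem_M_iff.mp N.maxM_mem
  rcases eq_or_ne i N.lastPort with rfl | hne
  · exact hi
  · exfalso
    have hlt : i < N.lastPort := by
      rw [Fin.lt_def]
      have h1 : (i : ℕ) ≤ N.p - 1 := Nat.le_pred_of_lt i.isLt
      have hne' : (i : ℕ) ≠ N.p - 1 := fun h => hne (Fin.ext h)
      exact lt_of_le_of_ne h1 hne'
    obtain ⟨v, hv⟩ := N.A_nonempty N.lastPort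
    have hlt2 := N.A_ordered i N.lastPort N.maxM v hlt hi hv
    exact absurd (N.M.le_max' v (N.mem_M_of_mem hv)) (not_le.mpr hlt2)

lemma samePort_filter {i : Fin N.p} {v : Fin N.n} (hv : v ∈ N.A i) :
    Finset.univ.filter (fun j => N.samePort j v) = N.A i := by
  ext j
  rw [Finset.mem_filter]
  simp only [Finset.mem_univ, true_and, samePort]
  constructor
  · rintro ⟨i', hj, hv'⟩
    rwa [N.port_unique hv' hv] at hj
  · intro hj; exact ⟨i, hj, hv⟩

lemma sum_M (f : Fin N.n → ℝ) :
    ∑ k ∈ N.M, f k = ∑ i, ∑ k ∈ N.A i, f k := by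
  rw [M, Finset.sum_biUnion]
  intro i _ j _ hij
  exact N.A_disjoint i j hij

/-- Key homogeneous lemma: under the homogeneous axioms the voltages are constant. -/
lemma const_of_homog (V : Fin N.n → ℝ)
    (hI : ∀ k, k ∉ N.M → ∑ l, N.c k l * (V k - V l) = 0)
    (hP : ∀ i : Fin N.p, i ≠ N.lastPort → ∑ k ∈ N.A i, ∑ l, N.c k l * (V k - V l) = 0)
    (hB : ∀ k, k ∈ N.M → V k = V (N.root k)) :
    ∀ k l, V k = V l := by
  set f : Fin N.n → ℝ := fun k => ∑ l, N.c k l * (V k - V l) with hf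
  have hT : ∑ k, f k = 0 := by
    have h1 : ∑ k, f k = - ∑ k, f k := by
      calc ∑ k, f k = ∑ k, ∑ l, N.c k l * (V k - V l) := rfl
        _ = ∑ l, ∑ k, N.c k l * (V k - V l) := Finset.sum_comm
        _ = ∑ l, ∑ k, -(N.c l k * (V l - V k)) := by
              refine Finset.sum_congr rfl fun l _ => Finset.sum_congr rfl fun k _ => ?_
              rw [N.c_symm]; ring
        _ = - ∑ l, ∑ k, N.c l k * (V l - V k) := by
              simp [Finset.sum_neg_distrib]
        _ = - ∑ k, f k := rfl
    linarith
  have hMsum : ∑ k ∈ N.M, f k = 0 := by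
    rw [Finset.sum_subset (Finset.subset_univ N.M) (fun x _ hx => hI x hx)]
    exact hT
  have hP_all : ∀ i : Fin N.p, ∑ k ∈ N.A i, f k = 0 := by
    have hsum : ∑ i, (∑ k ∈ N.A i, f k) = 0 := by rw [← N.sum_M]; exact hMsum
    intro i
    rcases eq_or_ne i N.lastPort with rfl | hne
    · have h1 := Finset.sum_eq_single_of_mem N.lastPort (Finset.mem_univ N.lastPort)
        (fun j _ hj => hP j hj)
      rw [← h1]
      exact hsum
    · exact hP i hne
  have hS : ∑ k, V k * f k = 0 := by
    rw [← Finset.sum_subset (Finset.subset_univ N.M)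
      (fun x _ hx => mul_eq_zero_of_right (V x) (hI x hx))]
    rw [N.sum_M]
    apply Finset.sum_eq_zero
    intro i _
    calc ∑ k ∈ N.A i, V k * f k
        = ∑ k ∈ N.A i, V ((N.A i).max' (N.A_nonempty i)) * f k := by
          refine Finset.sum_congr rfl fun k hk => ?_
          rw [hB k (N.mem_M_of_mem hk), N.root_of_mem hk]
      _ = V ((N.A i).max' (N.A_nonempty i)) * ∑ k ∈ N.A i, f k := by
          rw [Finset.mul_sum]
      _ = 0 := by rw [hP_all i, mul_zero]
  have hE : ∑ k, ∑ l, N.c k l * (V k - V l) ^ 2 = 0 := by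
    have hS2 : ∑ k, ∑ l, V l * (N.c l k * (V l - V k)) = 0 := by
      rw [Finset.sum_comm]
      calc ∑ l, ∑ k, V l * (N.c l k * (V l - V k))
          = ∑ l, V l * f l := by
            refine Finset.sum_congr rfl fun l _ => ?_
            rw [hf, Finset.mul_sum]
        _ = 0 := hS
    have hS1 : ∑ k, ∑ l, V k * (N.c k l * (V k - V l)) = 0 := by
      calc ∑ k, ∑ l, V k * (N.c k l * (V k - V l))
          = ∑ k, V k * f k := by
            refine Finset.sum_congr rfl fun k _ => ?_
            rw [hf, Finset.mul_sum]
        _ = 0 := hS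
    calc ∑ k, ∑ l, N.c k l * (V k - V l) ^ 2
        = ∑ k, ∑ l, (V k * (N.c k l * (V k - V l)) + V l * (N.c l k * (V l - V k))) := by
          refine Finset.sum_congr rfl fun k _ => Finset.sum_congr rfl fun l _ => ?_
          rw [N.c_symm l k]; ring
      _ = (∑ k, ∑ l, V k * (N.c k l * (V k - V l)))
            + ∑ k, ∑ l, V l * (N.c l k * (V l - V k)) := by
          rw [← Finset.sum_add_distrib]
          exact Finset.sum_congr rfl fun k _ => Finset.sum_add_distrib
      _ = 0 := by rw [hS1, hS2, add_zero]
  have hterm : ∀ k l, N.c k l * (V k - V l) ^ 2 = 0 := by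
    have h1 := (Finset.sum_eq_zero_iff_of_nonneg
      (fun k _ => Finset.sum_nonneg (fun l _ => mul_nonneg (N.c_nonneg k l) (sq_nonneg _)))).mp hE
    intro k l
    have h2 := (Finset.sum_eq_zero_iff_of_nonneg
      (fun l _ => mul_nonneg (N.c_nonneg k l) (sq_nonneg _))).mp (h1 k (Finset.mem_univ k))
    exact h2 l (Finset.mem_univ l)
  have hadj : ∀ k l, N.graph.Adj k l → V k = V l := by
    intro k l h
    have hc := N.c_pos k l h
    have ht := hterm k l
    have h0 : (V k - V l) ^ 2 = 0 := by
      rcases mul_eq_zero.mp ht with h' | h'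
      · exact absurd h' (ne_of_gt hc)
      · exact h'
    have := (pow_eq_zero_iff two_ne_zero).mp h0
    linarith
  intro k l
  obtain ⟨w⟩ := N.connected k l
  induction w with
  | nil => rfl
  | cons h p ih => exact (hadj _ _ h).trans ih

/-- The square linear system: Kirchhoff at interior vertices, voltage differences at
non-root boundary vertices, port current sums at non-maximal roots, and a pin at the
maximal boundary vertex. -/
noncomputable def Lfun (U : Fin N.n → ℝ) : Fin N.n → ℝ := fun k =>
  if k ∉ N.M then ∑ l, N.c k l * (U k - U l)
  else if N.root k ≠ k then U k - U (N.root k)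
  else if k = N.maxM then U k
  else ∑ j ∈ Finset.univ.filter (fun j => N.samePort j k), ∑ l, N.c j l * (U j - U l)

noncomputable def Lmap : (Fin N.n → ℝ) →ₗ[ℝ] (Fin N.n → ℝ) where
  toFun := N.Lfun
  map_add' U V := by
    funext k
    simp only [Lfun, Pi.add_apply]
    split_ifs <;>
      first
        | ring1
        | (rw [← Finset.sum_add_distrib]
           refine Finset.sum_congr rfl fun j _ => ?_
           first
             | ring1
             | (rw [← Finset.sum_add_distrib]
                exact Finset.sum_congr rfl fun l _ => by ring))
  map_smul' a U := by
    funext k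
    simp only [Lfun, Pi.smul_apply, smul_eq_mul, RingHom.id_apply]
    split_ifs <;>
      first
        | ring1
        | (rw [Finset.mul_sum]
           refine Finset.sum_congr rfl fun j _ => ?_
           first
             | ring1
             | (rw [Finset.mul_sum]
                exact Finset.sum_congr rfl fun l _ => by ring))

lemma Lfun_interior (U : Fin N.n → ℝ) {k : Fin N.n} (hk : k ∉ N.M) :
    N.Lfun U k = ∑ l, N.c k l * (U k - U l) := by
  rw [Lfun, if_pos hk]

lemma Lfun_nonroot (U : Fin N.n → ℝ) {k : Fin N.n} (hk : k ∈ N.M) (hr : N.root k ≠ k) :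
    N.Lfun U k = U k - U (N.root k) := by
  rw [Lfun, if_neg (not_not_intro hk), if_pos hr]

lemma Lfun_maxM (U : Fin N.n → ℝ) : N.Lfun U N.maxM = U N.maxM := by
  rw [Lfun, if_neg (not_not_intro N.maxM_mem),
    if_neg (not_not_intro N.root_maxM), if_pos rfl]

lemma Lfun_port (U : Fin N.n → ℝ) {i : Fin N.p} (hi : i ≠ N.lastPort) :
    N.Lfun U ((N.A i).max' (N.A_nonempty i)) = ∑ j ∈ N.A i, ∑ l, N.c j l * (U j - U l) := by
  set r := (N.A i).max' (N.A_nonempty i) with hr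
  have hrA : r ∈ N.A i := (N.A i).max'_mem _
  have hrM : r ∈ N.M := N.mem_M_of_mem hrA
  have hroot : N.root r = r := N.root_max i
  have hrne : r ≠ N.maxM := by
    intro h
    exact hi (N.port_unique hrA (h ▸ N.maxM_mem_last))
  rw [Lfun, if_neg (not_not_intro hrM), if_neg (not_not_intro hroot), if_neg hrne,
    N.samePort_filter hrA]

lemma Lmap_injective : Function.Injective N.Lmap := by
  have key : ∀ U, N.Lfun U = 0 → U = 0 := by
    intro U h
    have hcongr : ∀ k, N.Lfun U k = 0 := fun k => congrFun h k
    have hI : ∀ k, k ∉ N.M → ∑ l, N.c k l * (U k - U l) = 0 := by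
      intro k hk; rw [← N.Lfun_interior U hk]; exact hcongr k
    have hP : ∀ i : Fin N.p, i ≠ N.lastPort →
        ∑ k ∈ N.A i, ∑ l, N.c k l * (U k - U l) = 0 := by
      intro i hi; rw [← N.Lfun_port U hi]; exact hcongr _
    have hB : ∀ k, k ∈ N.M → U k = U (N.root k) := by
      intro k hk
      rcases eq_or_ne (N.root k) k with h' | h'
      · rw [h']
      · have := hcongr k
        rw [N.Lfun_nonroot U hk h'] at this
        linarith
    have hconst := N.const_of_homog U hI hP hB
    have hmax : U N.maxM = 0 := by rw [← N.Lfun_maxM U]; exact hcongr _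
    funext k
    rw [Pi.zero_apply, hconst k N.maxM, hmax]
  intro U V h
  have h0 : N.Lmap (U - V) = 0 := by rw [map_sub, h, sub_self]
  have := key (U - V) h0
  exact sub_eq_zero.mp this

lemma Lmap_surjective : Function.Surjective N.Lmap :=
  LinearMap.injective_iff_surjective.mp N.Lmap_injective

end Network
end Superport


namespace Superport

/-- **Existence and uniqueness for superport circuits.**  For any superport circuit there
exist currents `I` and voltages `U` satisfying axioms (C), (I), (P), (B); the currents are
unique and the voltages are unique up to adding the same constant. -/
theorem exists_unique_voltages_currents (N : Network) (ΔU : Fin N.n → ℝ) :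
    (∃ U I, N.Axioms ΔU U I) ∧
    (∀ U₁ I₁ U₂ I₂, N.Axioms ΔU U₁ I₁ → N.Axioms ΔU U₂ I₂ →
      I₁ = I₂ ∧ ∃ const : ℝ, ∀ k, U₁ k = U₂ k + const) := by
  constructor
  · -- existence
    obtain ⟨U, hU⟩ := N.Lmap_surjective
      (fun k => if k ∈ N.M ∧ N.root k ≠ k then ΔU k else 0)
    have hU' : ∀ k, N.Lfun U k = (if k ∈ N.M ∧ N.root k ≠ k then ΔU k else 0) :=
      fun k => congrFun hU k
    refine ⟨U, fun k l => N.c k l * (U k - U l), fun k l => rfl, ?_, ?_, ?_⟩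
    · intro k hk
      have h := hU' k
      rw [N.Lfun_interior U hk, if_neg (fun h' => hk h'.1)] at h
      exact h
    · intro i hi
      have h := hU' ((N.A i).max' (N.A_nonempty i))
      rw [N.Lfun_port U hi, if_neg ?_] at h
      · exact h
      · rintro ⟨-, hr⟩
        exact hr (N.root_max i)
    · intro k hk hr
      have h := hU' k
      rw [N.Lfun_nonroot U hk hr, if_pos ⟨hk, hr⟩] at h
      exact h
  · -- uniqueness
    rintro U₁ I₁ U₂ I₂ ⟨hC₁, hI₁, hP₁, hB₁⟩ ⟨hC₂, hI₂, hP₂, hB₂⟩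
    set V : Fin N.n → ℝ := fun k => U₁ k - U₂ k with hV
    have hdiff : ∀ k l, N.c k l * (V k - V l) = I₁ k l - I₂ k l := by
      intro k l; rw [hC₁, hC₂, hV]; ring
    have hI : ∀ k, k ∉ N.M → ∑ l, N.c k l * (V k - V l) = 0 := by
      intro k hk
      calc ∑ l, N.c k l * (V k - V l) = ∑ l, (I₁ k l - I₂ k l) :=
            Finset.sum_congr rfl fun l _ => hdiff k l
        _ = ∑ l, I₁ k l - ∑ l, I₂ k l := Finset.sum_sub_distrib _ _
        _ = 0 := by rw [hI₁ k hk, hI₂ k hk, sub_self]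
    have hP : ∀ i : Fin N.p, i ≠ N.lastPort →
        ∑ k ∈ N.A i, ∑ l, N.c k l * (V k - V l) = 0 := by
      intro i hi
      calc ∑ k ∈ N.A i, ∑ l, N.c k l * (V k - V l)
          = ∑ k ∈ N.A i, (∑ l, I₁ k l - ∑ l, I₂ k l) := by
            refine Finset.sum_congr rfl fun k _ => ?_
            rw [← Finset.sum_sub_distrib]
            exact Finset.sum_congr rfl fun l _ => hdiff k l
        _ = ∑ k ∈ N.A i, ∑ l, I₁ k l - ∑ k ∈ N.A i, ∑ l, I₂ k l := Finset.sum_sub_distrib _ _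
        _ = 0 := by rw [hP₁ i hi, hP₂ i hi, sub_self]
    have hB : ∀ k, k ∈ N.M → V k = V (N.root k) := by
      intro k hk
      rcases eq_or_ne (N.root k) k with h' | h'
      · rw [h']
      · have h1 := hB₁ k hk h'
        have h2 := hB₂ k hk h'
        simp only [hV]
        linarith
    have hconst := N.const_of_homog V hI hP hB
    constructor
    · funext k l
      have h := hconst k l
      simp only [hV] at h
      rw [hC₁, hC₂]
      have h2 : U₁ k - U₁ l = U₂ k - U₂ l := by linarith
      rw [h2]
    · refine ⟨V N.maxM, fun k => ?_⟩
      have h := hconst k N.maxM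
      simp only [hV] at h ⊢
      linarith

end Superport
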